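/- Tverberg's partitioning theorem: Let d ≥ 1 and p ≥ 1 be integers and let P be a finite set of points in EuclideanSpace ℝ (Fin d) with at least (p − 1)*(d + 1) + 1 elements. Then P can be partitioned into p pairwise disjoint subsets P₁, …, P_p whose union is P, such that the intersection of the convex hulls ⋂ i, convexHull ℝ (P i) is nonempty. -/

import Mathlib

open Finset RealInnerProductSpace

section helpers
variable {V : Type*} [NormedAddCommGroup V] [InnerProductSpace ℝ V]

/-- Extract weights indexed by the family from membership in the convex hull of a range. -/
lemma exists_weights_of_mem_convexHull_range {ι : Type*} [Fintype ι] {g : ι → V} {x : V}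
    (hx : x ∈ convexHull ℝ (Set.range g)) :
    ∃ w : ι → ℝ, (∀ i, 0 ≤ w i) ∧ ∑ i, w i = 1 ∧ ∑ i, w i • g i = x := by
  classical
  have hr : Set.range g = ((Finset.univ.image g : Finset V) : Set V) := by simp
  rw [hr] at hx
  obtain ⟨W, hW0, hW1, hWx⟩ := Finset.mem_convexHull'.1 hx
  have hιne : Nonempty ι := by
    rcases isEmpty_or_nonempty ι with h | h
    · exfalso
      rw [Finset.univ_eq_empty, Finset.image_empty] at hW1
      simp at hW1
    · exact h
  let rep : V → ι := fun y => if h : ∃ i, g i = y then h.choose else Classical.arbitrary ι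
  have hrep : ∀ y ∈ Finset.univ.image g, g (rep y) = y := by
    intro y hy
    obtain ⟨i, _, rfl⟩ := Finset.mem_image.1 hy
    have h : ∃ i', g i' = g i := ⟨i, rfl⟩
    simp only [rep, dif_pos h]
    exact h.choose_spec
  refine ⟨fun i => ∑ y ∈ (Finset.univ.image g).filter (fun y => rep y = i), W y, ?_, ?_, ?_⟩
  · intro i
    exact Finset.sum_nonneg fun y hy => hW0 y (Finset.mem_filter.1 hy).1
  · rw [Finset.sum_fiberwise_of_maps_to (fun y _ => Finset.mem_univ (rep y))]
    exact hW1
  · calc ∑ i, (∑ y ∈ (Finset.univ.image g).filter (fun y => rep y = i), W y) • g i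
        = ∑ i, ∑ y ∈ (Finset.univ.image g).filter (fun y => rep y = i), W y • g i := by
          simp [Finset.sum_smul]
      _ = ∑ i, ∑ y ∈ (Finset.univ.image g).filter (fun y => rep y = i), W y • y := by
          refine Finset.sum_congr rfl fun i _ => Finset.sum_congr rfl fun y hy => ?_
          obtain ⟨hy1, hy2⟩ := Finset.mem_filter.1 hy
          rw [← hy2, hrep y hy1]
      _ = ∑ y ∈ Finset.univ.image g, W y • y :=
          Finset.sum_fiberwise_of_maps_to (fun y _ => Finset.mem_univ (rep y)) _
      _ = x := hWx

/-- Existence of a norm-minimizing point in the convex hull of a finite set, together with the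
variational inequality. -/
lemma exists_min_norm_convexHull [FiniteDimensional ℝ V] (s : Finset V) (hs : s.Nonempty) :
    ∃ x ∈ convexHull ℝ (s : Set V), ∀ y ∈ convexHull ℝ (s : Set V),
      ‖x‖ ≤ ‖y‖ ∧ ‖x‖ ^ 2 ≤ ⟪x, y⟫ := by
  have hK : IsCompact (convexHull ℝ (s : Set V)) := (s.finite_toSet).isCompact_convexHull ℝ
  have hKne : (convexHull ℝ (s : Set V)).Nonempty := by
    obtain ⟨a, ha⟩ := hs
    exact ⟨a, subset_convexHull ℝ _ ha⟩
  obtain ⟨x, hxK, hmin⟩ := hK.exists_isMinOn hKne (continuous_norm.continuousOn)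
  have hmin' : ∀ y ∈ convexHull ℝ (s : Set V), ‖x‖ ≤ ‖y‖ := fun y hy => hmin hy
  refine ⟨x, hxK, fun y hy => ⟨hmin' y hy, ?_⟩⟩
  have hconv : Convex ℝ (convexHull ℝ (s : Set V)) := convex_convexHull ℝ _
  have heq : ‖(0 : V) - x‖ = ⨅ w : (convexHull ℝ (s : Set V)), ‖(0 : V) - w‖ := by
    refine le_antisymm ?_ ?_
    · haveI : Nonempty (convexHull ℝ (s : Set V)) := hKne.to_subtype
      refine le_ciInf fun w => ?_
      simp only [zero_sub, norm_neg]
      exact hmin' w w.2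
    · have hbdd : BddBelow (Set.range fun w : (convexHull ℝ (s : Set V)) => ‖(0 : V) - (w : V)‖) := by
        refine ⟨0, ?_⟩
        rintro _ ⟨w, rfl⟩
        positivity
      exact ciInf_le hbdd ⟨x, hxK⟩
  have h := (norm_eq_iInf_iff_real_inner_le_zero hconv hxK).1 heq y hy
  have h2 : ⟪x, y - x⟫ ≥ 0 := by
    have : ⟪(0 : V) - x, y - x⟫ = -⟪x, y - x⟫ := by
      rw [zero_sub, inner_neg_left]
    linarith [this ▸ h]
  rw [inner_sub_right] at h2
  have : ⟪x, x⟫ = ‖x‖ ^ 2 := real_inner_self_eq_norm_sq x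
  linarith

end helpers

theorem colorful_caratheodory {V : Type*} [NormedAddCommGroup V] [InnerProductSpace ℝ V]
    [FiniteDimensional ℝ V] {n : ℕ} (hn : Module.finrank ℝ V ≤ n)
    (S : Fin (n + 1) → Finset V) (hS : ∀ i, (0 : V) ∈ convexHull ℝ (S i : Set V))
:
    ∃ g : Fin (n + 1) → V, (∀ i, g i ∈ S i) ∧ (0 : V) ∈ convexHull ℝ (Set.range g) := by
  classical
  have key : ∀ g : Fin (n + 1) → V, ∃ x ∈ convexHull ℝ (Set.range g),
      ∀ y ∈ convexHull ℝ (Set.range g), ‖x‖ ≤ ‖y‖ ∧ ‖x‖ ^ 2 ≤ ⟪x, y⟫ := by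
    intro g
    have hne : (Finset.univ.image g).Nonempty :=
      ⟨g 0, Finset.mem_image_of_mem g (Finset.mem_univ 0)⟩
    have h := exists_min_norm_convexHull (Finset.univ.image g) hne
    have hr : ((Finset.univ.image g : Finset V) : Set V) = Set.range g := by simp
    rwa [hr] at h
  choose mp hmp1 hmp2 using key
  set T : Finset (Fin (n + 1) → V) := Fintype.piFinset S with hT
  have hSne : ∀ i, (S i).Nonempty := by
    intro i
    rcases (S i).eq_empty_or_nonempty with h | h
    · exfalso; have h2 := hS i; rw [h] at h2; simp at h2
    · exact h
  have hTne : T.Nonempty := Fintype.piFinset_nonempty.2 hSne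
  obtain ⟨g₀, hg₀T, hg₀min⟩ := T.exists_min_image (fun g => ‖mp g‖) hTne
  refine ⟨g₀, fun i => (Fintype.mem_piFinset.1 hg₀T) i, ?_⟩
  set x := mp g₀ with hxdef
  by_cases hx0 : x = 0
  · rw [← hx0]; exact hmp1 g₀
  exfalso
  have ha : (0 : ℝ) < ‖x‖ ^ 2 := by
    have := norm_pos_iff.2 hx0
    positivity
  obtain ⟨w, hw0, hw1, hwx⟩ := exists_weights_of_mem_convexHull_range (hmp1 g₀)
  have hsupp : ∀ i, ‖x‖ ^ 2 ≤ ⟪x, g₀ i⟫ := fun i =>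
    (hmp2 g₀ (g₀ i) (subset_convexHull ℝ _ (Set.mem_range_self i))).2
  have hzero : ∑ i, w i * (⟪x, g₀ i⟫ - ‖x‖ ^ 2) = 0 := by
    have h1 : ∑ i, w i * ⟪x, g₀ i⟫ = ‖x‖ ^ 2 := by
      have h2 : ⟪x, ∑ i, w i • g₀ i⟫ = ∑ i, w i * ⟪x, g₀ i⟫ := by
        rw [inner_sum]; simp [real_inner_smul_right]
      rw [hwx, real_inner_self_eq_norm_sq] at h2
      exact h2.symm
    have h3 : ∑ i, w i * (⟪x, g₀ i⟫ - ‖x‖ ^ 2)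
        = (∑ i, w i * ⟪x, g₀ i⟫) - (∑ i, w i) * ‖x‖ ^ 2 := by
      rw [Finset.sum_mul, ← Finset.sum_sub_distrib]
      exact Finset.sum_congr rfl fun i _ => by ring
    rw [h3, h1, hw1, one_mul, sub_self]
  have heach : ∀ i, w i * (⟪x, g₀ i⟫ - ‖x‖ ^ 2) = 0 := fun i =>
    (Finset.sum_eq_zero_iff_of_nonneg
      (fun j _ => mul_nonneg (hw0 j) (by linarith [hsupp j]))).1 hzero i (Finset.mem_univ i)
  set Hs : Set V := Set.range g₀ ∩ {y | ⟪x, y⟫ = ‖x‖ ^ 2} with hHs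
  have hxH : x ∈ convexHull ℝ Hs := by
    set tpos := Finset.univ.filter (fun i => 0 < w i) with htpos
    have hsum : ∑ i ∈ tpos, w i = 1 := by
      rw [← hw1]
      apply Finset.sum_subset (Finset.subset_univ _)
      intro i _ hi
      have h4 : ¬ 0 < w i := by simpa [htpos] using hi
      linarith [hw0 i]
    have hval : ∑ i ∈ tpos, w i • g₀ i = x := by
      rw [hxdef, ← hwx]
      apply Finset.sum_subset (Finset.subset_univ _)
      intro i _ hi
      have h4 : ¬ 0 < w i := by simpa [htpos] using hi
      have h5 : w i = 0 := le_antisymm (not_lt.1 h4) (hw0 i)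
      simp [h5]
    have hmem : ∀ i ∈ tpos, g₀ i ∈ Hs := by
      intro i hi
      have hiw : 0 < w i := (Finset.mem_filter.1 hi).2
      have h6 : ⟪x, g₀ i⟫ - ‖x‖ ^ 2 = 0 := by
        rcases mul_eq_zero.1 (heach i) with h | h
        · exact absurd h (ne_of_gt hiw)
        · exact h
      exact ⟨Set.mem_range_self i, by simp only [Set.mem_setOf_eq]; linarith⟩
    have hcm := Finset.centerMass_mem_convexHull tpos (fun i _ => hw0 i)
      (by rw [hsum]; norm_num) hmem
    rwa [Finset.centerMass_eq_of_sum_1 _ _ hsum, hval] at hcm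
  rw [convexHull_eq_union] at hxH
  simp only [Set.mem_iUnion] at hxH
  obtain ⟨t, ht, hai, hxt⟩ := hxH
  have htne : t.Nonempty := by
    rcases t.eq_empty_or_nonempty with h | h
    · exfalso; rw [h] at hxt; simp at hxt
    · exact h
  haveI : Nonempty {y // y ∈ t} := ⟨⟨htne.choose, htne.choose_spec⟩⟩
  have hcardt : t.card ≤ n := by
    have h2 := hai.finrank_vectorSpan_add_one
    have hc : Fintype.card {y // y ∈ t} = t.card := Fintype.card_coe t
    set f : V →ₗ[ℝ] ℝ := ((innerSL ℝ x : V →L[ℝ] ℝ) : V →ₗ[ℝ] ℝ) with hf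
    have hspan : vectorSpan ℝ (Set.range (Subtype.val : {y // y ∈ t} → V))
        ≤ LinearMap.ker f := by
      rw [Subtype.range_coe]
      rw [vectorSpan_def, Submodule.span_le]
      rintro v ⟨y, hy, z, hz, rfl⟩
      have hy' := (ht hy).2
      have hz' := (ht hz).2
      simp only [Set.mem_setOf_eq] at hy' hz'
      simp only [SetLike.mem_coe, LinearMap.mem_ker]
      show ⟪x, y -ᵥ z⟫ = 0
      rw [vsub_eq_sub, inner_sub_right, hy', hz', sub_self]
    have hker : Module.finrank ℝ (LinearMap.ker f) + 1 ≤ Module.finrank ℝ V := by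
      have hrn := f.finrank_range_add_finrank_ker
      have hfx : f x ≠ 0 := by
        show ⟪x, x⟫ ≠ 0
        rw [real_inner_self_eq_norm_sq]
        exact ne_of_gt ha
      have hbot : LinearMap.range f ≠ ⊥ := by
        intro hb
        apply hfx
        have hm : f x ∈ LinearMap.range f := ⟨x, rfl⟩
        rw [hb] at hm
        simpa using hm
      have h0 : Module.finrank ℝ (LinearMap.range f) ≠ 0 :=
        fun h => hbot (Submodule.finrank_eq_zero.1 h)
      omega
    have hmono := Submodule.finrank_mono hspan
    omega
  -- find a free color k
  let pick : V → Fin (n + 1) := fun y => if h : ∃ i, g₀ i = y then h.choose else 0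
  have hpick : ∀ y ∈ t, g₀ (pick y) = y := by
    intro y hy
    have h : ∃ i, g₀ i = y := (ht hy).1
    simp only [pick, dif_pos h]
    exact h.choose_spec
  obtain ⟨k, hk⟩ : ∃ k : Fin (n + 1), k ∉ t.image pick := by
    by_contra h
    push_neg at h
    have h1 : (Finset.univ : Finset (Fin (n + 1))) ⊆ t.image pick := fun k _ => h k
    have h2 := Finset.card_le_card h1
    have h3 := Finset.card_image_le (s := t) (f := pick)
    simp only [Finset.card_univ, Fintype.card_fin] at h2
    omega
  -- a point of S k on the other side
  obtain ⟨yk, hykS, hykx⟩ : ∃ y ∈ S k, ⟪x, y⟫ ≤ 0 := by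
    by_contra h
    push_neg at h
    obtain ⟨W, hW0, hW1, hW⟩ := Finset.mem_convexHull'.1 (hS k)
    have h0 : ∑ y ∈ S k, W y * ⟪x, y⟫ = 0 := by
      have h2 : ⟪x, ∑ y ∈ S k, W y • y⟫ = ∑ y ∈ S k, W y * ⟪x, y⟫ := by
        rw [inner_sum]; simp [real_inner_smul_right]
      rw [hW] at h2
      simpa using h2.symm
    have hpos : 0 < ∑ y ∈ S k, W y * ⟪x, y⟫ := by
      obtain ⟨y0, hy0, hy0pos⟩ : ∃ y ∈ S k, 0 < W y := by
        by_contra h'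
        push_neg at h'
        have h5 : ∑ y ∈ S k, W y = 0 :=
          Finset.sum_eq_zero fun y hy => le_antisymm (h' y hy) (hW0 y hy)
        rw [hW1] at h5
        norm_num at h5
      exact Finset.sum_pos' (fun y hy => mul_nonneg (hW0 y hy) (le_of_lt (h y hy)))
        ⟨y0, hy0, mul_pos hy0pos (h y0 hy0)⟩
    rw [h0] at hpos
    exact lt_irrefl 0 hpos
  -- exchange
  set g' := Function.update g₀ k yk with hg'
  have hg'T : g' ∈ T := by
    rw [hT, Fintype.mem_piFinset]
    intro i
    rcases eq_or_ne i k with rfl | hik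
    · simp [g', hykS]
    · rw [hg', Function.update_of_ne hik]
      exact Fintype.mem_piFinset.1 hg₀T i
  have htsub : (t : Set V) ⊆ Set.range g' := by
    intro y hy
    have h1 : pick y ≠ k := by
      intro h
      exact hk (h ▸ Finset.mem_image_of_mem pick hy)
    refine ⟨pick y, ?_⟩
    rw [hg', Function.update_of_ne h1]
    exact hpick y hy
  have hxg' : x ∈ convexHull ℝ (Set.range g') := convexHull_mono htsub hxt
  have hykg' : yk ∈ convexHull ℝ (Set.range g') :=
    subset_convexHull ℝ _ ⟨k, by rw [hg']; simp⟩
  set a := ‖x‖ ^ 2 with hadef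
  set qq := ‖yk - x‖ ^ 2 with hqq
  have hqq0 : (0 : ℝ) ≤ qq := by positivity
  set s' : ℝ := a / (a + qq) with hs'
  have hs'0 : 0 < s' := div_pos ha (by linarith)
  have hs'1 : s' ≤ 1 := by
    rw [div_le_one (by linarith)]
    linarith
  set z := (1 - s') • x + s' • yk with hz
  have hzK : z ∈ convexHull ℝ (Set.range g') :=
    (convex_convexHull ℝ _) hxg' hykg' (by linarith) (le_of_lt hs'0) (by ring)
  have hinner : ⟪x, yk - x⟫ ≤ -a := by
    rw [inner_sub_right, real_inner_self_eq_norm_sq]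
    linarith
  have hznorm : ‖z‖ ^ 2 < ‖x‖ ^ 2 := by
    have hzx : z = x + s' • (yk - x) := by
      rw [hz]
      module
    rw [hzx, norm_add_sq_real, real_inner_smul_right]
    have h2 : ‖s' • (yk - x)‖ ^ 2 = s' ^ 2 * qq := by
      rw [norm_smul, mul_pow, Real.norm_eq_abs, sq_abs, hqq]
    rw [h2]
    have hkey : s' * qq ≤ a := by
      rw [hs', div_mul_eq_mul_div, div_le_iff₀ (by linarith)]
      nlinarith
    nlinarith [mul_le_mul_of_nonneg_left hinner (le_of_lt hs'0), mul_pos hs'0 ha]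
  have h1 : ‖mp g'‖ ≤ ‖z‖ := (hmp2 g' z hzK).1
  have h2 : ‖x‖ ≤ ‖mp g'‖ := hg₀min g' hg'T
  have h3 : ‖z‖ < ‖x‖ := lt_of_pow_lt_pow_left₀ 2 (norm_nonneg x) hznorm
  linarith


theorem tverberg (d p : ℕ) (hd : 1 ≤ d) (hp : 1 ≤ p)
    (P : Finset (EuclideanSpace ℝ (Fin d)))
    (hcard : (p - 1) * (d + 1) + 1 ≤ P.card) :
    ∃ f : Fin p → Finset (EuclideanSpace ℝ (Fin d)),
      (∀ i, f i ⊆ P) ∧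
      (∀ i j, i ≠ j → Disjoint (f i) (f j)) ∧
      (⋃ i, (f i : Set (EuclideanSpace ℝ (Fin d)))) = (P : Set (EuclideanSpace ℝ (Fin d))) ∧
      (⋂ i, convexHull ℝ ((f i : Set (EuclideanSpace ℝ (Fin d))))).Nonempty := by
  classical
  obtain ⟨q, rfl⟩ : ∃ q, p = q + 1 := ⟨p - 1, (Nat.succ_pred_eq_of_pos hp).symm⟩
  let E := EuclideanSpace ℝ (Fin d)
  set n : ℕ := q * (d + 1) with hn
  have hq1 : (0 : ℝ) < (q : ℝ) + 1 := by positivity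
  have hNle : n + 1 ≤ P.card := by simpa [hn] using hcard
  obtain ⟨A, hAP, hAcard⟩ := Finset.exists_subset_card_eq hNle
  have hAcard' : Fintype.card {x // x ∈ A} = n + 1 := by rw [Fintype.card_coe, hAcard]
  let e : Fin (n + 1) ≃ {x // x ∈ A} := (Fintype.equivFinOfCardEq hAcard').symm
  let a : Fin (n + 1) → E := fun i => (e i : E)
  have ha_mem : ∀ i, a i ∈ A := fun i => (e i).2
  have ha_inj : Function.Injective a := fun i j h => e.injective (Subtype.ext h)
  have ha_img : Finset.univ.image a = A := by
    apply Finset.eq_of_subset_of_card_le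
    · intro y hy
      obtain ⟨i, _, rfl⟩ := Finset.mem_image.1 hy
      exact ha_mem i
    · rw [hAcard, Finset.card_image_of_injective _ ha_inj, Finset.card_univ, Fintype.card_fin]
  set hat : E → Fin (d + 1) → ℝ := fun x => Fin.cons 1 (fun m => x m) with hhat
  set v : Fin (q + 1) → Fin q → ℝ :=
    fun j k => (if j = Fin.castSucc k then 1 else 0) - ((q : ℝ) + 1)⁻¹ with hv
  have hvsum : ∀ k : Fin q, ∑ j, v j k = 0 := by
    intro k
    rw [hv]
    rw [Finset.sum_sub_distrib, Finset.sum_ite_eq' Finset.univ (Fin.castSucc k) (fun _ => (1:ℝ))]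
    simp [Finset.card_univ]
    field_simp
    norm_num
  set tens : E → Fin (q + 1) → EuclideanSpace ℝ (Fin q × Fin (d + 1)) := fun x j => WithLp.toLp 2 (fun km : Fin q × Fin (d + 1) => v j km.1 * hat x km.2) with htens
  have htens_apply : ∀ (x : E) (j : Fin (q + 1)) (km : Fin q × Fin (d + 1)),
      tens x j km = v j km.1 * hat x km.2 := fun x j km => rfl
  have htens_sum : ∀ x : E, ∑ j, tens x j = 0 := by
    intro x
    ext km
    rw [WithLp.ofLp_sum, Finset.sum_apply]
    have h1 : ∑ j, tens x j km = (∑ j, v j km.1) * hat x km.2 := by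
      rw [Finset.sum_mul]
    rw [h1, hvsum km.1, zero_mul]
    rfl
  set S : Fin (n + 1) → Finset (EuclideanSpace ℝ (Fin q × Fin (d + 1))) := fun i => Finset.image (tens (a i)) Finset.univ with hS
  have hS0 : ∀ i, (0 : EuclideanSpace ℝ (Fin q × Fin (d + 1))) ∈ convexHull ℝ ((S i : Set (EuclideanSpace ℝ (Fin q × Fin (d + 1))))) := by
    intro i
    have hsw : ∑ _j : Fin (q + 1), ((q : ℝ) + 1)⁻¹ = 1 := by
      rw [Finset.sum_const, Finset.card_univ, Fintype.card_fin, nsmul_eq_mul]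
      push_cast
      field_simp
    have hcm := Finset.centerMass_mem_convexHull (Finset.univ : Finset (Fin (q + 1)))
      (w := fun _ => ((q : ℝ) + 1)⁻¹) (fun j _ => by positivity) (by rw [hsw]; norm_num)
      (z := tens (a i)) (fun j _ => Finset.mem_coe.2 (Finset.mem_image_of_mem _ (Finset.mem_univ j)))
    rwa [Finset.centerMass_eq_of_sum_1 _ _ hsw, ← Finset.smul_sum, htens_sum, smul_zero] at hcm
  have hrank : Module.finrank ℝ (EuclideanSpace ℝ (Fin q × Fin (d + 1))) ≤ n := by
    rw [finrank_euclideanSpace, Fintype.card_prod, Fintype.card_fin, Fintype.card_fin, hn]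
  obtain ⟨g, hg, hg0⟩ := colorful_caratheodory hrank S hS0
  have hgσ : ∀ i, ∃ j, tens (a i) j = g i := by
    intro i
    obtain ⟨j, _, hj⟩ := Finset.mem_image.1 (hg i)
    exact ⟨j, hj⟩
  choose σ hσ using hgσ
  obtain ⟨lam, hlam0, hlam1, hlamsum⟩ := exists_weights_of_mem_convexHull_range hg0
  have hsum : ∑ i, lam i • tens (a i) (σ i) = 0 := by
    rw [← hlamsum]
    exact Finset.sum_congr rfl fun i _ => by rw [hσ i]
  have hcoord : ∀ km : Fin q × Fin (d + 1),
      ∑ i, lam i * (v (σ i) km.1 * hat (a i) km.2) = 0 := by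
    intro km
    have h1 : (∑ i, lam i • tens (a i) (σ i)) km = (0 : EuclideanSpace ℝ (Fin q × Fin (d + 1))) km := by rw [hsum]
    rw [WithLp.ofLp_sum, Finset.sum_apply] at h1
    have h2 : ∑ i, (lam i • tens (a i) (σ i)) km
        = ∑ i, lam i * (v (σ i) km.1 * hat (a i) km.2) := by
      refine Finset.sum_congr rfl fun i _ => ?_
      rw [PiLp.smul_apply, htens_apply, smul_eq_mul]
    rw [h2] at h1
    exact h1
  set fib : Fin (q + 1) → Finset (Fin (n + 1)) :=
    fun j => Finset.univ.filter (fun i => σ i = j) with hfib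
  set c : Fin (q + 1) → Fin (d + 1) → ℝ :=
    fun j m => ∑ i ∈ fib j, lam i * hat (a i) m with hc
  have claimA : ∀ (m : Fin (d + 1)) (k : Fin q), ∑ j, c j m * v j k = 0 := by
    intro m k
    have h1 : ∑ j, c j m * v j k = ∑ i, lam i * hat (a i) m * v (σ i) k := by
      rw [← Finset.sum_fiberwise_of_maps_to (fun i _ => Finset.mem_univ (σ i))
        (fun i => lam i * hat (a i) m * v (σ i) k)]
      refine Finset.sum_congr rfl fun j _ => ?_
      rw [hc, Finset.sum_mul]
      refine Finset.sum_congr rfl fun i hi => ?_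
      replace hi : σ i = j := by simpa [hfib] using hi
      rw [hi]
    rw [h1, ← hcoord (k, m)]
    exact Finset.sum_congr rfl fun i _ => by ring
  have claimB : ∀ (m : Fin (d + 1)) (j : Fin (q + 1)),
      c j m = (∑ j', c j' m) / ((q : ℝ) + 1) := by
    intro m
    have hcs : ∀ k : Fin q, c (Fin.castSucc k) m = (∑ j', c j' m) / ((q : ℝ) + 1) := by
      intro k
      have h := claimA m k
      have h1 : ∑ j, c j m * v j k
          = c (Fin.castSucc k) m - (∑ j', c j' m) * ((q : ℝ) + 1)⁻¹ := by
        rw [hv]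
        simp only [mul_sub]
        rw [Finset.sum_sub_distrib]
        congr 1
        · simp only [mul_ite, mul_one, mul_zero]
          rw [Finset.sum_ite_eq' Finset.univ (Fin.castSucc k) (fun j => c j m)]
          simp
        · rw [← Finset.sum_mul]
      rw [h1] at h
      rw [div_eq_mul_inv]
      linarith
    intro j
    refine Fin.lastCases ?_ hcs j
    have hsplit : ∑ j', c j' m
        = (∑ k : Fin q, c (Fin.castSucc k) m) + c (Fin.last q) m :=
      Fin.sum_univ_castSucc (fun j' => c j' m)
    have h2 : ∑ k : Fin q, c (Fin.castSucc k) m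
        = (q : ℝ) * ((∑ j', c j' m) / ((q : ℝ) + 1)) := by
      rw [Finset.sum_congr rfl fun k _ => hcs k, Finset.sum_const, Finset.card_univ,
        Fintype.card_fin, nsmul_eq_mul]
    have h3 : c (Fin.last q) m = ∑ j', c j' m - (q : ℝ) * ((∑ j', c j' m) / ((q : ℝ) + 1)) := by
      rw [← h2]; linarith [hsplit]
    rw [h3]
    field_simp
    ring
  have hctotal : ∀ m, ∑ j', c j' m = ∑ i, lam i * hat (a i) m := by
    intro m
    exact Finset.sum_fiberwise_of_maps_to (fun i _ => Finset.mem_univ (σ i)) _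
  have hmu : ∀ j, ∑ i ∈ fib j, lam i = ((q : ℝ) + 1)⁻¹ := by
    intro j
    have h0 : c j 0 = ∑ i ∈ fib j, lam i := by
      rw [hc]
      refine Finset.sum_congr rfl fun i _ => ?_
      rw [hhat]
      simp
    have h1 : ∑ j', c j' 0 = 1 := by
      rw [hctotal 0, ← hlam1]
      refine Finset.sum_congr rfl fun i _ => ?_
      rw [hhat]
      simp
    have h2 := claimB 0 j
    rw [h1] at h2
    rw [← h0, h2, one_div]
  -- the common point
  set z : E := ∑ i ∈ fib 0, (((q : ℝ) + 1) * lam i) • a i with hz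
  have hco : ∀ (j : Fin (q + 1)) (m : Fin d),
      (∑ i ∈ fib j, (((q : ℝ) + 1) * lam i) • a i) m = ((q : ℝ) + 1) * c j (Fin.succ m) := by
    intro j m
    rw [WithLp.ofLp_sum, Finset.sum_apply, hc, Finset.mul_sum]
    refine Finset.sum_congr rfl fun i _ => ?_
    rw [PiLp.smul_apply, smul_eq_mul, hhat]
    simp only [Fin.cons_succ]
    ring
  have claimD : ∀ j, ∑ i ∈ fib j, (((q : ℝ) + 1) * lam i) • a i = z := by
    intro j
    rw [hz]
    ext m
    rw [hco j m, hco 0 m, claimB (Fin.succ m) j, claimB (Fin.succ m) 0]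
  -- the partition
  set f : Fin (q + 1) → Finset E :=
    fun j => if j = 0 then (fib 0).image a ∪ (P \ A) else (fib j).image a with hf
  have himg_sub : ∀ j, (fib j).image a ⊆ f j := by
    intro j
    simp only [hf]
    by_cases h : j = 0
    · subst h
      simp only [if_pos rfl]
      exact Finset.subset_union_left
    · simp only [if_neg h]
      exact subset_rfl
  have hfP : ∀ j, f j ⊆ P := by
    intro j y hy
    simp only [hf] at hy
    by_cases h : j = 0
    · rw [if_pos h] at hy
      rcases Finset.mem_union.1 hy with h' | h'
      · obtain ⟨i, _, rfl⟩ := Finset.mem_image.1 h'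
        exact hAP (ha_mem i)
      · exact (Finset.mem_sdiff.1 h').1
    · rw [if_neg h] at hy
      obtain ⟨i, _, rfl⟩ := Finset.mem_image.1 hy
      exact hAP (ha_mem i)
  have himg_mem : ∀ (j : Fin (q + 1)) (y : E), y ∈ (fib j).image a → y ∈ A ∧ ∃ i, σ i = j ∧ a i = y := by
    intro j y hy
    obtain ⟨i, hi, rfl⟩ := Finset.mem_image.1 hy
    have hσi : σ i = j := by simpa [hfib] using hi
    exact ⟨ha_mem i, i, hσi, rfl⟩
  have hdisj : ∀ i j : Fin (q + 1), i ≠ j → Disjoint (f i) (f j) := by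
    intro j₁ j₂ hne
    rw [Finset.disjoint_left]
    intro y hy1 hy2
    have hmem : ∀ j, y ∈ f j → (y ∈ (fib j).image a) ∨ (j = 0 ∧ y ∈ P \ A) := by
      intro j hyj
      simp only [hf] at hyj
      by_cases h : j = 0
      · rw [if_pos h] at hyj
        rcases Finset.mem_union.1 hyj with h' | h'
        · exact Or.inl (by rw [h]; exact h')
        · exact Or.inr ⟨h, h'⟩
      · rw [if_neg h] at hyj
        exact Or.inl hyj
    rcases hmem j₁ hy1 with h1 | ⟨h10, h1⟩ <;> rcases hmem j₂ hy2 with h2 | ⟨h20, h2⟩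
    · obtain ⟨_, i₁, hσ1, hai1⟩ := himg_mem j₁ y h1
      obtain ⟨_, i₂, hσ2, hai2⟩ := himg_mem j₂ y h2
      have : i₁ = i₂ := ha_inj (by rw [hai1, hai2])
      exact hne (by rw [← hσ1, this, hσ2])
    · exact (Finset.mem_sdiff.1 h2).2 (himg_mem j₁ y h1).1
    · exact (Finset.mem_sdiff.1 h1).2 (himg_mem j₂ y h2).1
    · exact hne (h10.trans h20.symm)
  have hunion : (⋃ j, ((f j : Set E))) = (P : Set E) := by
    apply Set.Subset.antisymm
    · refine Set.iUnion_subset fun j => ?_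
      intro y hy
      exact Finset.mem_coe.2 (hfP j (Finset.mem_coe.1 hy))
    · intro y hy
      by_cases hyA : y ∈ A
      · have : y ∈ Finset.univ.image a := by rw [ha_img]; exact hyA
        obtain ⟨i, _, rfl⟩ := Finset.mem_image.1 this
        refine Set.mem_iUnion.2 ⟨σ i, ?_⟩
        refine Finset.mem_coe.2 (himg_sub (σ i) ?_)
        exact Finset.mem_image_of_mem a (by simp [hfib])
      · refine Set.mem_iUnion.2 ⟨0, ?_⟩
        simp only [hf, if_pos rfl]
        exact Finset.mem_coe.2 (Finset.mem_union_right _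
          (Finset.mem_sdiff.2 ⟨Finset.mem_coe.1 hy, hyA⟩))
  have hzmem : ∀ j, z ∈ convexHull ℝ ((f j : Set E)) := by
    intro j
    have hws : ∑ i ∈ fib j, ((q : ℝ) + 1) * lam i = 1 := by
      rw [← Finset.mul_sum, hmu j]
      field_simp
    have hcm := Finset.centerMass_mem_convexHull (fib j)
      (w := fun i => ((q : ℝ) + 1) * lam i)
      (fun i _ => mul_nonneg (le_of_lt hq1) (hlam0 i)) (by rw [hws]; norm_num)
      (z := a) (fun i hi => Finset.mem_coe.2 (Finset.mem_image_of_mem a hi))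
    rw [Finset.centerMass_eq_of_sum_1 _ _ hws, claimD j] at hcm
    exact convexHull_mono (by exact_mod_cast himg_sub j) hcm
  exact ⟨f, hfP, hdisj, hunion, ⟨z, Set.mem_iInter.2 hzmem⟩⟩
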